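/- Let A be a (not necessarily unital) C*-algebra. Then A possesses a quasi-identity (an element e ∈ A with a = e a + a e − e a e for all a ∈ A; no norm bound on e is assumed) if and only if A is unital, i.e., there exists u ∈ A with u a = a and a u = a for all a ∈ A. Moreover, in this case every quasi-identity of A equals the identity: any e ∈ A with a = e a + a e − e a e for all a ∈ A satisfies e a = a and a e = a for all a ∈ A. -/

import Mathlib

lemma approx_aux {B : Type*} [CStarAlgebra B] [PartialOrder B] [StarOrderedRing B]
    (z : B) {δ : ℝ} (hδ : 0 < δ) :
    ‖(1 - cfc (fun t : ℝ => t / (|t| + δ)) (z * star z)) * z‖ ^ 2 ≤ δ := by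
  have hφc : Continuous (fun t : ℝ => t / (|t| + δ)) :=
    continuous_id.div (continuous_abs.add continuous_const) (fun x => by positivity)
  have hc1 : Continuous (fun t : ℝ => 1 - t / (|t| + δ)) := continuous_const.sub hφc
  set D : B := z * star z with hDdef
  have hDpos : (0 : B) ≤ D := mul_star_self_nonneg z
  have hDsa : IsSelfAdjoint D := .of_nonneg hDpos
  set H : B := cfc (fun t : ℝ => t / (|t| + δ)) D with hH
  have hHsa : IsSelfAdjoint H := hH ▸ cfc_predicate _ D
  have h1Hsa : IsSelfAdjoint (1 - H) := by
    rw [IsSelfAdjoint, star_sub, star_one, hHsa.star_eq]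
  have h1H : (1 : B) - H = cfc (fun t : ℝ => 1 - t / (|t| + δ)) D := by
    rw [hH, cfc_sub (fun _ : ℝ => (1:ℝ)) _ D (by fun_prop) hφc.continuousOn,
      cfc_const_one ℝ D]
  have hprod : cfc (fun t : ℝ => (1 - t / (|t| + δ)) * t * (1 - t / (|t| + δ))) D
      = (1 - H) * D * (1 - H) := by
    rw [cfc_mul (fun t : ℝ => (1 - t / (|t| + δ)) * t) (fun t : ℝ => 1 - t / (|t| + δ)) D
        (hc1.mul continuous_id' |>.continuousOn) hc1.continuousOn,
      cfc_mul (fun t : ℝ => 1 - t / (|t| + δ)) (fun t : ℝ => t) D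
        hc1.continuousOn continuousOn_id,
      cfc_id' ℝ D, ← h1H]
  have hbound : ‖(1 - H) * D * (1 - H)‖ ≤ δ := by
    rw [← hprod]
    refine norm_cfc_le hδ.le fun t ht => ?_
    have ht0 : 0 ≤ t := spectrum_nonneg_of_nonneg hDpos ht
    have habs : |t| = t := abs_of_nonneg ht0
    have h1 : 1 - t / (|t| + δ) = δ / (t + δ) := by
      rw [habs]; field_simp; ring
    rw [h1, Real.norm_eq_abs, abs_of_nonneg (by positivity)]
    have hne : t + δ ≠ 0 := by positivity
    have hkey : δ / (t + δ) * t * (δ / (t + δ)) = δ * t * δ / ((t + δ) * (t + δ)) := by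
      field_simp
    rw [hkey, div_le_iff₀ (by positivity)]
    nlinarith [mul_nonneg ht0 ht0, mul_nonneg ht0 hδ.le, mul_nonneg hδ.le hδ.le,
      mul_nonneg (mul_nonneg ht0 ht0) hδ.le, mul_nonneg (mul_nonneg ht0 hδ.le) hδ.le]
  calc ‖(1 - H) * z‖ ^ 2 = ‖((1 - H) * z) * star ((1 - H) * z)‖ := by
        rw [CStarRing.norm_self_mul_star, sq]
    _ = ‖(1 - H) * D * (1 - H)‖ := by
        rw [star_mul, h1Hsa.star_eq, hDdef]
        congr 1
        noncomm_ring
    _ ≤ δ := hbound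

open scoped CStarAlgebra in
open Unitization in
lemma key_left {A : Type*} [NonUnitalCStarAlgebra A] (e : A)
    (he : ∀ a : A, a = e * a + a * e - e * a * e) (a : A) :
    e * a + e * a - e * (e * a) = a := by
  have Q : ∀ c : A, ((1 : A⁺¹) - e) * c * ((1 : A⁺¹) - e) = 0 := by
    intro c
    have h : (c : A⁺¹) = e * c + c * e - e * (c : A⁺¹) * e := by
      have := congrArg (fun x : A => (x : A⁺¹)) (he c)
      push_cast at this
      simpa using this
    have expand : ((1 : A⁺¹) - e) * c * ((1 : A⁺¹) - e)
        = ↑c - (↑e * ↑c + ↑c * ↑e - ↑e * ↑c * ↑e) := by noncomm_ring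
    rw [expand]
    nth_rewrite 1 [h]
    abel
  have hw : ((a - e * a : A) : A⁺¹) = ((1 : A⁺¹) - e) * a := by
    rw [Unitization.inr_sub ℂ, Unitization.inr_mul ℂ, sub_mul, one_mul]
  have key2 : ∀ δ : ℝ, 0 < δ →
      ‖((1 : A⁺¹) - e) * (((1 : A⁺¹) - e) * a)‖ ^ 2 ≤ ‖(1 : A⁺¹) - (e : A⁺¹)‖ ^ 2 * δ := by
    intro δ hδ
    set w : A := a - e * a with hwdef
    have hφ0 : (fun t : ℝ => t / (|t| + δ)) 0 = 0 := by simp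
    set h : A := cfcₙ (fun t : ℝ => t / (|t| + δ)) (w * star w) with hhdef
    have hH : (h : A⁺¹) = cfc (fun t : ℝ => t / (|t| + δ)) ((w : A⁺¹) * star (w : A⁺¹)) := by
      rw [hhdef, Unitization.real_cfcₙ_eq_cfc_inr _ _ hφ0, Unitization.inr_mul ℂ,
        Unitization.inr_star]
    have happrox : ‖((1 : A⁺¹) - h) * (w : A⁺¹)‖ ^ 2 ≤ δ := by
      rw [hH]; exact approx_aux (w : A⁺¹) hδ
    have hXeq : ((1 : A⁺¹) - e) * (((1 : A⁺¹) - e) * a)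
        = ((1 : A⁺¹) - e) * (((1 : A⁺¹) - h) * (w : A⁺¹)) := by
      have h0 : ((1 : A⁺¹) - e) * h * ((1 : A⁺¹) - e) = 0 := Q h
      rw [hw]
      calc ((1 : A⁺¹) - e) * (((1 : A⁺¹) - e) * a)
          = ((1 : A⁺¹) - e) * (((1 : A⁺¹) - h) * (((1 : A⁺¹) - e) * a))
            + (((1 : A⁺¹) - e) * h * ((1 : A⁺¹) - e)) * a := by noncomm_ring
        _ = ((1 : A⁺¹) - e) * (((1 : A⁺¹) - h) * (((1 : A⁺¹) - e) * a)) := by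
            rw [h0, zero_mul, add_zero]
    calc ‖((1 : A⁺¹) - e) * (((1 : A⁺¹) - e) * a)‖ ^ 2
        ≤ (‖(1 : A⁺¹) - (e : A⁺¹)‖ * ‖((1 : A⁺¹) - h) * (w : A⁺¹)‖) ^ 2 := by
          rw [hXeq]; gcongr; exact norm_mul_le _ _
      _ = ‖(1 : A⁺¹) - (e : A⁺¹)‖ ^ 2 * ‖((1 : A⁺¹) - h) * (w : A⁺¹)‖ ^ 2 := by ring
      _ ≤ ‖(1 : A⁺¹) - (e : A⁺¹)‖ ^ 2 * δ := by gcongr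
  have hX0 : ((1 : A⁺¹) - e) * (((1 : A⁺¹) - e) * a) = 0 := by
    have hn : ‖((1 : A⁺¹) - e) * (((1 : A⁺¹) - e) * a)‖ ^ 2 ≤ 0 := by
      refine le_of_forall_pos_le_add fun ε hε => ?_
      have hC : (0:ℝ) ≤ ‖(1 : A⁺¹) - (e : A⁺¹)‖ ^ 2 := by positivity
      have := key2 (ε / (‖(1 : A⁺¹) - (e : A⁺¹)‖ ^ 2 + 1)) (by positivity)
      rw [zero_add]
      calc ‖((1 : A⁺¹) - e) * (((1 : A⁺¹) - e) * a)‖ ^ 2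
          ≤ ‖(1 : A⁺¹) - (e : A⁺¹)‖ ^ 2 * (ε / (‖(1 : A⁺¹) - (e : A⁺¹)‖ ^ 2 + 1)) := this
        _ ≤ ε := by
            rw [mul_div_assoc']
            rw [div_le_iff₀ (by positivity)]
            nlinarith
    have : ‖((1 : A⁺¹) - e) * (((1 : A⁺¹) - e) * a)‖ = 0 := by
      nlinarith [norm_nonneg (((1 : A⁺¹) - e) * (((1 : A⁺¹) - e) * a)), sq_nonneg ‖((1 : A⁺¹) - e) * (((1 : A⁺¹) - e) * a)‖]
    exact norm_eq_zero.mp this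
  have hXa : ((1 : A⁺¹) - e) * (((1 : A⁺¹) - e) * a)
      = ↑a - ((e * a + e * a - e * (e * a) : A) : A⁺¹) := by
    simp only [Unitization.inr_sub ℂ, Unitization.inr_add ℂ, Unitization.inr_mul ℂ]
    noncomm_ring
  rw [hXa] at hX0
  exact inr_injective (R := ℂ) (sub_eq_zero.mp hX0).symm

lemma key_right {A : Type*} [NonUnitalCStarAlgebra A] (e : A)
    (he : ∀ a : A, a = e * a + a * e - e * a * e) (a : A) :
    a * e + a * e - a * e * e = a := by
  have he' : ∀ b : A, b = star e * b + b * star e - star e * b * star e := by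
    intro b
    have h := congrArg star (he (star b))
    simp only [star_sub, star_add, star_mul, star_star] at h
    rw [← mul_assoc] at h
    exact h.trans (by abel)
  have h2 := key_left (star e) he' (star a)
  have h3 := congrArg star h2
  simp only [star_sub, star_add, star_mul, star_star] at h3
  refine Eq.trans ?_ h3
  noncomm_ring

lemma quasi_is_unit {A : Type*} [NonUnitalCStarAlgebra A] (e : A)
    (he : ∀ a : A, a = e * a + a * e - e * a * e) (a : A) :
    e * a = a ∧ a * e = a := by
  obtain ⟨s, hs⟩ : ∃ s : A, s = e + e - e * e := ⟨_, rfl⟩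
  have hsL : ∀ x : A, s * x = x := by
    intro x
    have h := key_left e he x
    calc s * x = e * x + e * x - e * (e * x) := by rw [hs]; noncomm_ring
      _ = x := h
  have hsR : ∀ x : A, x * s = x := by
    intro x
    have h := key_right e he x
    calc x * s = x * e + x * e - x * e * e := by rw [hs]; noncomm_ring
      _ = x := h
  have hg : ∀ x : A, (s - e) * x * (s - e) = 0 := by
    intro x
    calc (s - e) * x * (s - e) = (s * x - e * x) * (s - e) := by rw [sub_mul]
      _ = (x - e * x) * (s - e) := by rw [hsL x]
      _ = x * (s - e) - (e * x) * (s - e) := by rw [sub_mul]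
      _ = (x * s - x * e) - ((e * x) * s - (e * x) * e) := by rw [mul_sub, mul_sub]
      _ = (x - x * e) - (e * x - e * x * e) := by rw [hsR x, hsR (e * x)]
      _ = x - (e * x + x * e - e * x * e) := by abel
      _ = 0 := by rw [← he x, sub_self]
  have hXX : ((s - e) * star (s - e)) * ((s - e) * star (s - e)) = 0 := by
    have h1 := hg (star (s - e))
    calc ((s - e) * star (s - e)) * ((s - e) * star (s - e))
        = ((s - e) * star (s - e) * (s - e)) * star (s - e) := by noncomm_ring
      _ = 0 := by rw [h1, zero_mul]
  have hX0 : (s - e) * star (s - e) = 0 := by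
    have hsa : star ((s - e) * star (s - e)) = (s - e) * star (s - e) := by
      rw [star_mul, star_star]
    have hnn : ‖(s - e) * star (s - e)‖ * ‖(s - e) * star (s - e)‖ = 0 := by
      rw [← CStarRing.norm_star_mul_self (x := (s - e) * star (s - e)), hsa, hXX, norm_zero]
    rw [← norm_eq_zero]
    exact mul_self_eq_zero.mp hnn
  have hse : s = e := by
    have hnn : ‖s - e‖ * ‖s - e‖ = 0 := by
      rw [← CStarRing.norm_self_mul_star (x := s - e), hX0, norm_zero]
    have := mul_self_eq_zero.mp hnn
    rw [norm_eq_zero, sub_eq_zero] at this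
    exact this
  exact ⟨by rw [← hse]; exact hsL a, by rw [← hse]; exact hsR a⟩

/-- A (not necessarily unital) C*-algebra has a quasi-identity iff it is unital;
moreover every quasi-identity is then a two-sided identity. -/
theorem stmt_7 {A : Type*} [NonUnitalNormedRing A] [StarRing A] [CStarRing A]
    [CompleteSpace A] [NormedSpace ℂ A] [IsScalarTower ℂ A A] [SMulCommClass ℂ A A]
    [StarModule ℂ A] :
    ((∃ e : A, ∀ a : A, a = e * a + a * e - e * a * e) ↔
      (∃ u : A, ∀ a : A, u * a = a ∧ a * u = a)) ∧
    (∀ e : A, (∀ a : A, a = e * a + a * e - e * a * e) →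
      ∀ a : A, e * a = a ∧ a * e = a) := by
  letI : NonUnitalCStarAlgebra A := { }
  have part2 : ∀ e : A, (∀ a : A, a = e * a + a * e - e * a * e) →
      ∀ a : A, e * a = a ∧ a * e = a := fun e he a => quasi_is_unit e he a
  refine ⟨⟨fun ⟨e, he⟩ => ⟨e, part2 e he⟩, fun ⟨u, hu⟩ => ⟨u, fun a => ?_⟩⟩, part2⟩
  have h1 := (hu a).1
  have h2 := (hu a).2
  rw [h1, h2]
  exact (add_sub_cancel_right a a).symm
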